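/- Fix r₀ > 0. Let r ∈ [r₀/2, r₀], r' ∈ [0, r₀] and θ ∈ [0, π], and set D = arccosh( cosh(r)·cosh(r') − sinh(r)·sinh(r')·cos(θ) ). If D ≤ r₀/3, then r' ≥ r₀/6 and θ ≤ (3π/r₀)·D; equivalently, θ·sinh(r₀) ≤ (3π·sinh(r₀)/r₀)·D. (This is the key estimate showing that on the part of a hyperbolic cone at distance at least r₀/2 from the vertex, the radial projection onto the base is Lipschitz with constant 3π·sinh(r₀)/r₀.) -/

import Mathlib

/-- The inverse hyperbolic cosine, defined (for `x ≥ 1`) by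
`arcosh x = log (x + sqrt (x² − 1))`. -/
noncomputable def arcosh (x : ℝ) : ℝ :=
  Real.log (x + Real.sqrt (x ^ 2 - 1))

lemma arcosh_nonneg' {x : ℝ} (hx : 1 ≤ x) : 0 ≤ arcosh x :=
  Real.log_nonneg (by nlinarith [Real.sqrt_nonneg (x ^ 2 - 1)])

lemma cosh_arcosh' {x : ℝ} (hx : 1 ≤ x) : Real.cosh (arcosh x) = x := by
  have h0 : (0:ℝ) ≤ x ^ 2 - 1 := by nlinarith
  have hs : Real.sqrt (x ^ 2 - 1) ^ 2 = x ^ 2 - 1 := Real.sq_sqrt h0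
  have hy : 0 < x + Real.sqrt (x ^ 2 - 1) := by
    nlinarith [Real.sqrt_nonneg (x ^ 2 - 1)]
  rw [arcosh, Real.cosh_eq, Real.exp_log hy, Real.exp_neg, Real.exp_log hy]
  field_simp
  nlinarith [hs]

/-- `sinh x ≤ x * exp x` for `x ≥ 0`. -/
lemma sinh_le_mul_exp {x : ℝ} (hx : 0 ≤ x) : Real.sinh x ≤ x * Real.exp x := by
  have h1 : 1 + (-(2 * x)) ≤ Real.exp (-(2 * x)) := by linarith [Real.add_one_le_exp (-(2 * x))]
  have h2 : Real.exp (-(2 * x)) = Real.exp (-x) * Real.exp (-x) := by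
    rw [← Real.exp_add]; ring_nf
  have h3 : Real.exp (-x) * Real.exp x = 1 := by rw [← Real.exp_add]; simp
  rw [Real.sinh_eq]
  nlinarith [Real.exp_pos x, Real.exp_pos (-x)]

set_option maxHeartbeats 1000000 in
/-- key Lipschitz estimate for the radial projection of a
hyperbolic cone onto its base, away from the vertex. -/
theorem cone_projection_lipschitz (r₀ r r' θ : ℝ) (hr₀ : 0 < r₀)
    (hr : r ∈ Set.Icc (r₀ / 2) r₀) (hr' : r' ∈ Set.Icc (0 : ℝ) r₀)
    (hθ : θ ∈ Set.Icc (0 : ℝ) Real.pi)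
    (hD : arcosh (Real.cosh r * Real.cosh r' -
        Real.sinh r * Real.sinh r' * Real.cos θ) ≤ r₀ / 3) :
    r₀ / 6 ≤ r' ∧
      θ ≤ (3 * Real.pi / r₀) *
        arcosh (Real.cosh r * Real.cosh r' -
          Real.sinh r * Real.sinh r' * Real.cos θ) := by
  obtain ⟨hr1, hr2⟩ := hr
  obtain ⟨hr'1, hr'2⟩ := hr'
  obtain ⟨hθ1, hθ2⟩ := hθ
  set x := Real.cosh r * Real.cosh r' - Real.sinh r * Real.sinh r' * Real.cos θ with hxdef
  set D := arcosh x with hDdef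
  have hrpos : 0 < r := lt_of_lt_of_le (by linarith) hr1
  have hss : 0 ≤ Real.sinh r * Real.sinh r' := by
    apply mul_nonneg <;> rw [Real.sinh_nonneg_iff] <;> linarith
  -- x ≥ cosh (r - r')
  have hcos1 : Real.cos θ ≤ 1 := Real.cos_le_one θ
  have hxge : Real.cosh (r - r') ≤ x := by
    rw [Real.cosh_sub, hxdef]
    nlinarith
  have hx1 : (1:ℝ) ≤ x := le_trans (Real.one_le_cosh _) hxge
  have hcoshD : Real.cosh D = x := cosh_arcosh' hx1
  have hD0 : 0 ≤ D := arcosh_nonneg' hx1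
  -- |r - r'| ≤ D
  have habs : |r - r'| ≤ D := by
    have : Real.cosh (r - r') ≤ Real.cosh D := by rw [hcoshD]; exact hxge
    rw [Real.cosh_le_cosh] at this
    rwa [abs_of_nonneg hD0] at this
  have hrr' : r - r' ≤ D := le_trans (le_abs_self _) habs
  have hr'6 : r₀ / 6 ≤ r' := by linarith
  refine ⟨hr'6, ?_⟩
  -- Notation
  set u := r₀ / 3 with hu
  set C := Real.cosh u with hC
  have hupos : 0 < u := by positivity
  have hC1 : (1:ℝ) ≤ C := Real.one_le_cosh u
  -- C ≥ 1 + u²/2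
  have hsinhhalf : u / 2 ≤ Real.sinh (u / 2) := by
    rw [Real.self_le_sinh_iff]; positivity
  have hCu : 1 + u ^ 2 / 2 ≤ C := by
    have h2 : Real.cosh u = Real.cosh (2 * (u / 2)) := by congr 1; ring
    rw [hC, h2, Real.cosh_two_mul, Real.cosh_sq]
    nlinarith
  -- cosh D ≤ C
  have hDC : Real.cosh D ≤ C := by
    rw [hC, Real.cosh_le_cosh, abs_of_nonneg hD0, abs_of_nonneg hupos.le]
    exact hD
  -- cosh D - 1 ≤ D² * C  (via sinh(D/2) ≤ (D/2) e^{D/2})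
  have hupper : Real.cosh D - 1 ≤ D ^ 2 * C := by
    have hsh : Real.sinh (D / 2) ≤ D / 2 * Real.exp (D / 2) :=
      sinh_le_mul_exp (by linarith)
    have hsh0 : 0 ≤ Real.sinh (D / 2) := Real.sinh_nonneg_iff.2 (by linarith)
    have h2 : Real.cosh D = Real.cosh (2 * (D / 2)) := by congr 1; ring
    have hexp : Real.exp (D / 2) * Real.exp (D / 2) = Real.exp D := by
      rw [← Real.exp_add]; norm_num
    have hec : Real.exp D ≤ 2 * Real.cosh D := by
      rw [← Real.cosh_add_sinh D]
      linarith [Real.sinh_lt_cosh D]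
    rw [h2, Real.cosh_two_mul, Real.cosh_sq]
    nlinarith [Real.exp_pos (D / 2)]
  -- lower bound: cosh D - 1 ≥ sinh r sinh r' (1 - cos θ)
  have hlower : Real.sinh r * Real.sinh r' * (1 - Real.cos θ) ≤ Real.cosh D - 1 := by
    rw [hcoshD, hxdef]
    have := Real.cosh_sub r r'
    nlinarith [Real.one_le_cosh (r - r')]
  -- sinh r ≥ sinh(3u/2), sinh r' ≥ sinh(u/2)
  have hs1 : Real.sinh (3 * u / 2) ≤ Real.sinh r := by
    rw [Real.sinh_le_sinh]; rw [hu]; linarith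
  have hs2 : Real.sinh (u / 2) ≤ Real.sinh r' := by
    rw [Real.sinh_le_sinh]; rw [hu]; linarith
  -- product identity: sinh(3u/2) sinh(u/2) = (cosh(2u) - cosh u)/2
  have hprod : Real.sinh (3 * u / 2) * Real.sinh (u / 2)
      = (2 * C ^ 2 - 1 - C) / 2 := by
    have ha : Real.cosh (3 * u / 2 + u / 2) = Real.cosh (3 * u / 2) * Real.cosh (u / 2)
        + Real.sinh (3 * u / 2) * Real.sinh (u / 2) := Real.cosh_add _ _
    have hb : Real.cosh (3 * u / 2 - u / 2) = Real.cosh (3 * u / 2) * Real.cosh (u / 2)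
        - Real.sinh (3 * u / 2) * Real.sinh (u / 2) := Real.cosh_sub _ _
    have h1 : (3 * u / 2 + u / 2 : ℝ) = 2 * u := by ring
    have h2 : (3 * u / 2 - u / 2 : ℝ) = u := by ring
    rw [h1] at ha; rw [h2] at hb
    have hc2 : Real.cosh (2 * u) = 2 * C ^ 2 - 1 := by
      rw [hC, Real.cosh_two_mul, Real.cosh_sq]; ring
    linarith
  -- 1 - cos θ ≥ 2 θ²/π²
  have hpi : 0 < Real.pi := Real.pi_pos
  have hsin : θ / Real.pi ≤ Real.sin (θ / 2) := by
    have := Real.mul_le_sin (x := θ / 2) (by linarith) (by linarith)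
    calc θ / Real.pi = 2 / Real.pi * (θ / 2) := by field_simp
    _ ≤ Real.sin (θ / 2) := this
  have hsin0 : 0 ≤ θ / Real.pi := by positivity
  have hcosid : Real.cos θ = 1 - 2 * Real.sin (θ / 2) ^ 2 := by
    have h2 : Real.cos (2 * (θ / 2)) = 1 - 2 * Real.sin (θ / 2) ^ 2 := by
      rw [Real.cos_two_mul, Real.cos_sq']; ring
    rw [← h2]; congr 1; ring
  have hcoslow : 2 * (θ / Real.pi) ^ 2 ≤ 1 - Real.cos θ := by
    rw [hcosid]
    have hsq2 : (θ / Real.pi) * (θ / Real.pi) ≤ Real.sin (θ / 2) * Real.sin (θ / 2) :=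
      mul_le_mul hsin hsin hsin0 (hsin0.trans hsin)
    nlinarith [hsq2]
  -- combine: u² θ² ≤ π² D²
  have hsr : 0 ≤ Real.sinh (u / 2) := Real.sinh_nonneg_iff.2 (by positivity)
  have hsr' : 0 ≤ Real.sinh r' := Real.sinh_nonneg_iff.2 (by linarith)
  have hthpi : 0 ≤ 1 - Real.cos θ := by linarith
  have hchain : (2 * C ^ 2 - 1 - C) / 2 * (2 * (θ / Real.pi) ^ 2)
      ≤ D ^ 2 * C := by
    calc (2 * C ^ 2 - 1 - C) / 2 * (2 * (θ / Real.pi) ^ 2)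
        = Real.sinh (3 * u / 2) * Real.sinh (u / 2) * (2 * (θ / Real.pi) ^ 2) := by
          rw [hprod]
      _ ≤ Real.sinh r * Real.sinh r' * (1 - Real.cos θ) := by
          apply mul_le_mul
          · exact mul_le_mul hs1 hs2 hsr (by nlinarith [Real.sinh_nonneg_iff.2 hrpos.le])
          · exact hcoslow
          · positivity
          · exact hss
      _ ≤ Real.cosh D - 1 := hlower
      _ ≤ D ^ 2 * C := hupper
  -- (2C²-1-C) = (2C+1)(C-1); with C-1 ≥ u²/2 get u²(2C+1)θ² ≤ 2π²D²C, then θ²u² ≤ π²D²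
  have hpi2 : (0:ℝ) < Real.pi ^ 2 := by positivity
  have hkey : u ^ 2 * θ ^ 2 ≤ Real.pi ^ 2 * D ^ 2 := by
    have hfac : 2 * C ^ 2 - 1 - C = (2 * C + 1) * (C - 1) := by ring
    have hexp : (θ / Real.pi) ^ 2 = θ ^ 2 / Real.pi ^ 2 := by rw [div_pow]
    rw [hfac, hexp] at hchain
    have h1 : (2 * C + 1) * (u ^ 2 / 2) * (θ ^ 2 / Real.pi ^ 2) ≤ D ^ 2 * C := by
      have hmono : (2 * C + 1) * (u ^ 2 / 2) * (θ ^ 2 / Real.pi ^ 2)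
          ≤ (2 * C + 1) * (C - 1) * (θ ^ 2 / Real.pi ^ 2) := by
        apply mul_le_mul_of_nonneg_right
        · apply mul_le_mul_of_nonneg_left (by linarith) (by linarith)
        · positivity
      linarith
    have h3 : (2 * C + 1) * u ^ 2 * θ ^ 2 ≤ D ^ 2 * C * (2 * Real.pi ^ 2) := by
      have h2 := mul_le_mul_of_nonneg_right h1 (by positivity : (0:ℝ) ≤ 2 * Real.pi ^ 2)
      have heq : (2 * C + 1) * (u ^ 2 / 2) * (θ ^ 2 / Real.pi ^ 2) * (2 * Real.pi ^ 2)
          = (2 * C + 1) * u ^ 2 * θ ^ 2 := by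
        field_simp
      rw [heq] at h2
      exact h2
    have hpd : (0:ℝ) ≤ Real.pi ^ 2 * D ^ 2 := by positivity
    have h5 : u ^ 2 * θ ^ 2 * (2 * C + 1) ≤ Real.pi ^ 2 * D ^ 2 * (2 * C + 1) := by
      linarith [h3, hpd]
    have h2C : (0:ℝ) < 2 * C + 1 := by linarith
    exact le_of_mul_le_mul_right h5 h2C
  -- conclude θ ≤ (3π/r₀) D = (π/u) D
  have hgoal : θ ≤ Real.pi / u * D := by
    have hrhs : 0 ≤ Real.pi / u * D := by positivity
    have hsq : θ ^ 2 ≤ (Real.pi / u * D) ^ 2 := by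
      rw [mul_pow, div_pow, div_mul_eq_mul_div, le_div_iff₀ (by positivity)]
      linarith [hkey]
    exact le_of_pow_le_pow_left₀ two_ne_zero hrhs hsq
  have : Real.pi / u = 3 * Real.pi / r₀ := by
    rw [hu]; field_simp
  rw [← this]
  exact hgoal
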